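/- arXiv:2110.15411 — 2 statements merged into one kernel-verified Lean document; each statement's English description precedes it below -/
import Mathlib

section
/- Let X be a topological space and (f_i)_{i<ω} a sequence of continuous functions from X to {0,1} such that there is N with Σ_{i} |f_i(b) − f_{i+1}(b)| ≤ N for all b ∈ X. Then the pointwise limit f of (f_i) exists and can be written as a difference F_1 − F_2 of two bounded lower semicontinuous functions on X. -/
open Filter

/-- Pointwise supremum of a pointwise-bounded family of continuous functions is
lower semicontinuous. -/
lemma lsc_ciSup_of_continuous {X : Type*} [TopologicalSpace X] (h : ℕ → X → ℝ)
    (hc : ∀ n, Continuous (h n)) (hb : ∀ x, BddAbove (Set.range fun n => h n x)) :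
    LowerSemicontinuous (fun x => ⨆ n, h n x) := by
  intro x y hy
  obtain ⟨n, hn⟩ := (lt_ciSup_iff (hb x)).mp hy
  filter_upwards [((hc n).tendsto x).eventually (eventually_gt_nhds hn)] with x' hx'
  exact lt_of_lt_of_le hx' (le_ciSup (hb x') n)

/-- If `f i : X → {0,1}` are continuous and DBSC-convergent (uniformly bounded
total variation), then the pointwise limit exists and is a difference of two
bounded lower semicontinuous functions. -/
theorem dbsc_limit_is_DBSC {X : Type*} [TopologicalSpace X] (f : ℕ → X → ℝ)
    (hcont : ∀ i, Continuous (f i))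
    (hvals : ∀ i b, f i b = 0 ∨ f i b = 1) (N : ℕ)
    (hN : ∀ b (n : ℕ), ∑ i ∈ Finset.range n, |f i b - f (i + 1) b| ≤ N) :
    ∃ (g F₁ F₂ : X → ℝ),
      (∀ b, Tendsto (fun i => f i b) atTop (nhds (g b))) ∧
      g = F₁ - F₂ ∧
      LowerSemicontinuous F₁ ∧ LowerSemicontinuous F₂ ∧
      (∃ C : ℝ, ∀ x, |F₁ x| ≤ C) ∧ (∃ C : ℝ, ∀ x, |F₂ x| ≤ C) := by
  set P : ℕ → X → ℝ := fun n b => ∑ i ∈ Finset.range n, max (f (i+1) b - f i b) 0 with hPdef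
  set M : ℕ → X → ℝ := fun n b => ∑ i ∈ Finset.range n, max (f i b - f (i+1) b) 0 with hMdef
  have hPcont : ∀ n, Continuous (P n) := fun n => by
    apply continuous_finset_sum
    exact fun i _ => Continuous.max ((hcont (i+1)).sub (hcont i)) continuous_const
  have hMcont : ∀ n, Continuous (M n) := fun n => by
    apply continuous_finset_sum
    exact fun i _ => Continuous.max ((hcont i).sub (hcont (i+1))) continuous_const
  have hPle : ∀ b n, P n b ≤ N := by
    intro b n
    refine le_trans (Finset.sum_le_sum fun i _ => ?_) (hN b n)
    rw [abs_sub_comm]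
    exact max_le (le_abs_self _) (abs_nonneg _)
  have hMle : ∀ b n, M n b ≤ N := by
    intro b n
    refine le_trans (Finset.sum_le_sum fun i _ => ?_) (hN b n)
    exact max_le (le_abs_self _) (abs_nonneg _)
  have hPmono : ∀ b, Monotone fun n => P n b := fun b =>
    monotone_nat_of_le_succ fun n => by
      simp only [hPdef, Finset.sum_range_succ]
      exact le_add_of_nonneg_right (le_max_right _ _)
  have hMmono : ∀ b, Monotone fun n => M n b := fun b =>
    monotone_nat_of_le_succ fun n => by
      simp only [hMdef, Finset.sum_range_succ]
      exact le_add_of_nonneg_right (le_max_right _ _)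
  have hPbdd : ∀ b, BddAbove (Set.range fun n => P n b) := fun b =>
    ⟨N, by rintro _ ⟨n, rfl⟩; exact hPle b n⟩
  have hMbdd : ∀ b, BddAbove (Set.range fun n => M n b) := fun b =>
    ⟨N, by rintro _ ⟨n, rfl⟩; exact hMle b n⟩
  have hdecomp : ∀ b n, f n b = f 0 b + P n b - M n b := by
    intro b n
    induction n with
    | zero => simp [hPdef, hMdef]
    | succ n ih =>
      simp only [hPdef, hMdef, Finset.sum_range_succ]
      have : max (f (n+1) b - f n b) 0 - max (f n b - f (n+1) b) 0
          = f (n+1) b - f n b := by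
        rcases le_total (f n b) (f (n+1) b) with h | h
        · rw [max_eq_left (by linarith), max_eq_right (by linarith)]; ring
        · rw [max_eq_right (by linarith), max_eq_left (by linarith)]; ring
      simp only [hPdef, hMdef] at ih
      linarith
  refine ⟨fun b => f 0 b + (⨆ n, P n b) - (⨆ n, M n b),
    fun b => f 0 b + (⨆ n, P n b), fun b => ⨆ n, M n b, ?_, ?_, ?_, ?_, ?_, ?_⟩
  · intro b
    have hPt : Tendsto (fun n => P n b) atTop (nhds (⨆ n, P n b)) :=
      tendsto_atTop_ciSup (hPmono b) (hPbdd b)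
    have hMt : Tendsto (fun n => M n b) atTop (nhds (⨆ n, M n b)) :=
      tendsto_atTop_ciSup (hMmono b) (hMbdd b)
    exact ((hPt.const_add (f 0 b)).sub hMt).congr fun n => (hdecomp b n).symm
  · funext b; simp [Pi.sub_apply]
  · exact ((hcont 0).lowerSemicontinuous).add
      (lsc_ciSup_of_continuous P hPcont hPbdd)
  · exact lsc_ciSup_of_continuous M hMcont hMbdd
  · refine ⟨1 + N, fun x => ?_⟩
    obtain ⟨h01, h02⟩ : 0 ≤ f 0 x ∧ f 0 x ≤ 1 := by rcases hvals 0 x with h | h <;> simp [h]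
    have hsle : (⨆ n, P n x) ≤ N := ciSup_le (hPle x)
    have hsge : (0:ℝ) ≤ ⨆ n, P n x := by
      refine le_trans (le_of_eq ?_) (le_ciSup (hPbdd x) 0)
      simp [hPdef]
    rw [abs_le]
    constructor
    · show -(1 + (N:ℝ)) ≤ f 0 x + ⨆ n, P n x
      linarith
    · show f 0 x + (⨆ n, P n x) ≤ 1 + (N:ℝ)
      linarith
  · refine ⟨N, fun x => ?_⟩
    have hsle : (⨆ n, M n x) ≤ N := ciSup_le (hMle x)
    have hsge : (0:ℝ) ≤ ⨆ n, M n x := by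
      refine le_trans (le_of_eq ?_) (le_ciSup (hMbdd x) 0)
      simp [hMdef]
    rw [abs_le]; constructor <;> linarith
end

section
/- Let L be a first-order language, T an L-theory, M a model of T, and let (a_i)_{i<ω} be a sequence of tuples in M that is order-indiscernible over ∅. If φ(x, y) is an L-formula and there exists b (in an elementary extension) such that φ(a_i, b) holds if and only if i is even, then for every n the sentence asserting 'for every subset F of {1,...,n} there is y such that φ(x_i, y) holds exactly for i ∈ F' is satisfied by (a_1, ..., a_n). -/
open FirstOrder Language

/-- If `(a i)` is a sequence of `m`-tuples in `M ⊨ T` that is order-indiscernible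
over `∅`, and in an elementary extension `N` there is a tuple `b` such that
`φ(a i, b)` holds iff `i` is even, then for every `n` and every subset `F` of
`{1, ..., n}` there is a tuple `c` in `N` such that `φ(a i, c)` holds exactly for
`i ∈ F`. -/
theorem alternation_yields_all_patterns
    {L : Language} (T : L.Theory) {M N : Type*}
    [L.Structure M] [L.Structure N] [Nonempty M] [Nonempty N]
    [T.Model M]
    (emb : M ↪ₑ[L] N)
    {m l : ℕ} (a : ℕ → (Fin m → M))
    (hind : ∀ (k : ℕ) (ψ : L.Formula (Fin k × Fin m)) (i j : Fin k → ℕ),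
      StrictMono i → StrictMono j →
      (ψ.Realize (fun p => a (i p.1) p.2) ↔ ψ.Realize (fun p => a (j p.1) p.2)))
    (φ : L.Formula (Fin m ⊕ Fin l)) (b : Fin l → N)
    (hb : ∀ i : ℕ,
      φ.Realize (Sum.elim (fun q => emb (a i q)) b) ↔ Even i) :
    ∀ (n : ℕ) (F : Set (Fin n)), ∃ c : Fin l → N, ∀ i : Fin n,
      (φ.Realize (Sum.elim (fun q => emb (a (i.val + 1) q)) c) ↔ i ∈ F) := by
  classical
  intro n F
  -- indices with the right parities
  set idx : Fin n → ℕ := fun k => 2 * k + (if k ∈ F then 0 else 1) with hidx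
  have hmono : StrictMono idx := by
    intro k k' h
    have : (k : ℕ) < k' := h
    simp only [hidx]
    split <;> split <;> omega
  have hmono2 : StrictMono (fun k : Fin n => (k : ℕ) + 1) := by
    intro k k' h
    have : (k : ℕ) < k' := h
    show (k : ℕ) + 1 < (k' : ℕ) + 1
    omega
  have hpar : ∀ k : Fin n, Even (idx k) ↔ k ∈ F := by
    intro k
    simp only [hidx]
    split <;> rename_i hk <;> simp [hk, Nat.even_add_one, parity_simps]
  -- the formula expressing the pattern
  set θ : L.Formula ((Fin n × Fin m) ⊕ Fin l) :=
    BoundedFormula.iInf (fun k : Fin n =>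
      if k ∈ F then φ.relabel (Sum.map (fun q => (k, q)) id)
      else (φ.relabel (Sum.map (fun q => (k, q)) id)).not) with hθ
  set ψ : L.Formula (Fin n × Fin m) := θ.iExs (Fin l) with hψ
  have hreal : ∀ (P : Type _) (_ : L.Structure P) (v : Fin n × Fin m → P),
      ψ.Realize v ↔ ∃ c : Fin l → P, ∀ k : Fin n,
        (φ.Realize (Sum.elim (fun q => v (k, q)) c) ↔ k ∈ F) := by
    intro P _ v
    rw [hψ, Formula.realize_iExs]
    apply exists_congr
    intro c
    have hθr : ∀ (u : (Fin n × Fin m) ⊕ Fin l → P),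
        θ.Realize u ↔ ∀ k : Fin n,
          (φ.Realize (fun s => u (Sum.map (fun q => (k, q)) id s)) ↔ k ∈ F) := by
      intro u
      rw [hθ]
      show BoundedFormula.Realize _ u default ↔ _
      rw [BoundedFormula.realize_iInf]
      apply forall_congr'
      intro k
      split <;> rename_i hk
      · simp only [hk, iff_true]
        exact Formula.realize_relabel
      · simp only [hk, iff_false]
        exact not_congr Formula.realize_relabel
    rw [hθr]
    apply forall_congr'
    intro k
    have h5 : (fun s => Sum.elim v c (Sum.map (fun q => (k, q)) id s))
        = Sum.elim (fun q => v (k, q)) c := by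
      funext s; cases s <;> rfl
    rw [h5]
  -- realize the pattern in N via b
  have h1 : ψ.Realize (fun p : Fin n × Fin m => emb (a (idx p.1) p.2)) := by
    rw [hreal N inferInstance]
    exact ⟨b, fun k => (hb (idx k)).trans (hpar k)⟩
  -- pull back to M
  have h2 : ψ.Realize (fun p : Fin n × Fin m => a (idx p.1) p.2) := by
    have := emb.map_formula ψ (fun p : Fin n × Fin m => a (idx p.1) p.2)
    exact this.mp h1
  -- indiscernibility
  have h3 : ψ.Realize (fun p : Fin n × Fin m => a (p.1.val + 1) p.2) :=
    (hind n ψ idx (fun k => k.val + 1) hmono hmono2).mp h2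
  -- push to N
  have h4 : ψ.Realize (fun p : Fin n × Fin m => emb (a (p.1.val + 1) p.2)) := by
    have := emb.map_formula ψ (fun p : Fin n × Fin m => a (p.1.val + 1) p.2)
    exact this.mpr h3
  rw [hreal N inferInstance] at h4
  obtain ⟨c, hc⟩ := h4
  exact ⟨c, hc⟩
end
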